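/- arXiv:2103.05555 — 2 statements merged into one kernel-verified Lean document; each statement's English description precedes it below -/
import Mathlib

section
/- For every Y > 0, the integral ∫_0^Y e^{2πi x²} dx equals e^{2πi/8}/(2√2) + ν/(2πY) - I₁, where |ν| ≤ 1 and I₁ is the integral of e^{2πi z²} over the circular arc from Y to Y·e^{2πi/8}; moreover |I₁| ≤ 1/(8Y). -/
open Real Complex MeasureTheory Set intervalIntegral

noncomputable section

namespace FresnelAux

/-- The entire function `z ↦ exp (2πi z²)`. -/
def f (z : ℂ) : ℂ := Complex.exp (2 * Real.pi * Complex.I * z ^ 2)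

lemma f_hasDerivAt (z : ℂ) :
    HasDerivAt f (4 * Real.pi * Complex.I * z * f z) z := by
  have h1 : HasDerivAt (fun z : ℂ => 2 * (Real.pi : ℂ) * Complex.I * z ^ 2)
      (2 * (Real.pi : ℂ) * Complex.I * (2 * z)) z := by
    simpa using (hasDerivAt_pow 2 z).const_mul (2 * (Real.pi : ℂ) * Complex.I)
  have := h1.cexp
  refine this.congr_deriv ?_
  unfold f; ring

lemma f_cont : Continuous f :=
  Complex.continuous_exp.comp (by fun_prop)

/-- Arc integrand. -/
def g (Y θ : ℝ) : ℂ :=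
  Complex.exp (2 * Real.pi * Complex.I * ((Y : ℂ) * Complex.exp (Complex.I * θ)) ^ 2) *
    ((Y : ℂ) * Complex.I * Complex.exp (Complex.I * θ))

lemma g_eq (Y θ : ℝ) :
    g Y θ = f ((Y : ℂ) * Complex.exp (Complex.I * θ)) *
      ((Y : ℂ) * Complex.I * Complex.exp (Complex.I * θ)) := rfl

/-- Common derivative (in `Y` of the arc integrand; in `θ` of `θ ↦ f(Y e^{iθ}) e^{iθ}`). -/
def E (Y θ : ℝ) : ℂ :=
  Complex.I * Complex.exp (Complex.I * θ) *
    ((4 * Real.pi * Complex.I * ((Y : ℂ) * Complex.exp (Complex.I * θ)) ^ 2 + 1) *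
      f ((Y : ℂ) * Complex.exp (Complex.I * θ)))

lemma exp_I_hasDerivAt (θ : ℝ) :
    HasDerivAt (fun θ : ℝ => Complex.exp (Complex.I * θ))
      (Complex.I * Complex.exp (Complex.I * θ)) θ := by
  have h1 : HasDerivAt (fun θ : ℝ => Complex.I * (θ : ℂ)) Complex.I θ := by
    simpa using (Complex.ofRealCLM.hasDerivAt (x := θ)).const_mul Complex.I
  simpa [mul_comm] using h1.cexp

lemma g_cont (Y : ℝ) : Continuous fun θ => g Y θ := by
  unfold g
  exact (Complex.continuous_exp.comp (by fun_prop)).mul (by fun_prop)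

lemma E_cont (Y : ℝ) : Continuous fun θ => E Y θ := by
  unfold E f
  refine Continuous.mul (by fun_prop) (Continuous.mul (by fun_prop) ?_)
  exact Complex.continuous_exp.comp (by fun_prop)

lemma hasDerivAt_g (Y θ : ℝ) :
    HasDerivAt (fun Y : ℝ => g Y θ) (E Y θ) Y := by
  set c := Complex.exp (Complex.I * θ) with hc
  have hz : HasDerivAt (fun Y : ℝ => (Y : ℂ) * c) c Y := by
    simpa using (Complex.ofRealCLM.hasDerivAt (x := Y)).mul_const c
  have h1 : HasDerivAt (f ∘ (fun Y : ℝ => (Y : ℂ) * c))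
      (c • (4 * Real.pi * Complex.I * ((Y : ℂ) * c) * f ((Y : ℂ) * c))) Y :=
    HasDerivAt.scomp Y (f_hasDerivAt _) hz
  rw [show (f ∘ (fun Y : ℝ => (Y : ℂ) * c)) = fun Y : ℝ => f ((Y : ℂ) * c) from rfl] at h1
  have h2 : HasDerivAt (fun Y : ℝ => (Y : ℂ) * Complex.I * c) (Complex.I * c) Y := by
    simpa [mul_assoc] using (Complex.ofRealCLM.hasDerivAt (x := Y)).mul_const (Complex.I * c)
  have := h1.mul h2
  simp only [g_eq, E]
  refine this.congr_deriv ?_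
  simp only [smul_eq_mul]
  ring

lemma hasDerivAt_theta (Y θ : ℝ) :
    HasDerivAt (fun θ : ℝ => f ((Y : ℂ) * Complex.exp (Complex.I * θ)) *
      Complex.exp (Complex.I * θ)) (E Y θ) θ := by
  have he := exp_I_hasDerivAt θ
  have hz : HasDerivAt (fun θ : ℝ => (Y : ℂ) * Complex.exp (Complex.I * θ))
      ((Y : ℂ) * (Complex.I * Complex.exp (Complex.I * θ))) θ := he.const_mul _
  have h1 : HasDerivAt (f ∘ (fun θ : ℝ => (Y : ℂ) * Complex.exp (Complex.I * θ)))
      (((Y : ℂ) * (Complex.I * Complex.exp (Complex.I * θ))) •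
        (4 * Real.pi * Complex.I * ((Y : ℂ) * Complex.exp (Complex.I * θ)) *
          f ((Y : ℂ) * Complex.exp (Complex.I * θ)))) θ :=
    HasDerivAt.scomp θ (f_hasDerivAt _) hz
  rw [show (f ∘ (fun θ : ℝ => (Y : ℂ) * Complex.exp (Complex.I * θ))) =
    fun θ : ℝ => f ((Y : ℂ) * Complex.exp (Complex.I * θ)) from rfl] at h1
  have := h1.mul he
  simp only [E]
  refine this.congr_deriv ?_
  simp only [smul_eq_mul]
  try ring

lemma norm_f_le (z : ℂ) : ‖f z‖ ≤ Real.exp (2 * Real.pi * ‖z‖ ^ 2) := by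
  unfold f
  rw [Complex.norm_exp]
  apply Real.exp_le_exp.2
  have h1 : (2 * (Real.pi : ℂ) * Complex.I * z ^ 2).re = -(2 * Real.pi * (z ^ 2).im) := by
    simp [Complex.mul_re, Complex.mul_im]; try ring
  rw [h1]
  have h2 : |(z ^ 2).im| ≤ ‖z‖ ^ 2 := by
    calc |(z ^ 2).im| ≤ ‖z ^ 2‖ := Complex.abs_im_le_norm _
    _ = ‖z‖ ^ 2 := by rw [norm_pow]
  nlinarith [Real.pi_pos, abs_nonneg (z ^ 2).im, neg_abs_le (z ^ 2).im]

lemma norm_E_le (R : ℝ) (x θ : ℝ) (hx : |x| ≤ R) :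
    ‖E x θ‖ ≤ (4 * Real.pi * R ^ 2 + 1) * Real.exp (2 * Real.pi * R ^ 2) := by
  have hR : 0 ≤ R := le_trans (abs_nonneg x) hx
  have he : ‖Complex.exp (Complex.I * θ)‖ = 1 := by
    rw [Complex.norm_exp]; simp
  have hz : ‖(x : ℂ) * Complex.exp (Complex.I * θ)‖ ≤ R := by
    rw [norm_mul, he, mul_one, Complex.norm_real, Real.norm_eq_abs]; exact hx
  have hzn : (0:ℝ) ≤ ‖(x : ℂ) * Complex.exp (Complex.I * θ)‖ := norm_nonneg _
  unfold E
  rw [norm_mul, norm_mul, Complex.norm_I, one_mul, he, one_mul, norm_mul]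
  have h1 : ‖4 * (Real.pi:ℂ) * Complex.I * ((x : ℂ) * Complex.exp (Complex.I * θ)) ^ 2 + 1‖
      ≤ 4 * Real.pi * R ^ 2 + 1 := by
    refine (norm_add_le _ _).trans ?_
    rw [norm_one]
    gcongr
    rw [norm_mul, norm_mul, Complex.norm_I, mul_one, norm_pow]
    have : ‖(4:ℂ) * (Real.pi:ℂ)‖ = 4 * Real.pi := by
      rw [norm_mul]
      simp [Complex.norm_real, _root_.abs_of_nonneg Real.pi_pos.le]
    rw [this]
    have h4 : (0:ℝ) ≤ 4 * Real.pi := by positivity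
    exact mul_le_mul_of_nonneg_left (pow_le_pow_left₀ hzn hz 2) h4
  have h2 : ‖f ((x : ℂ) * Complex.exp (Complex.I * θ))‖ ≤ Real.exp (2 * Real.pi * R ^ 2) := by
    refine (norm_f_le _).trans ?_
    apply Real.exp_le_exp.2
    have : ‖(x : ℂ) * Complex.exp (Complex.I * θ)‖ ^ 2 ≤ R ^ 2 := by gcongr
    nlinarith [Real.pi_pos]
  calc ‖4 * (Real.pi:ℂ) * Complex.I * ((x : ℂ) * Complex.exp (Complex.I * θ)) ^ 2 + 1‖ *
        ‖f ((x : ℂ) * Complex.exp (Complex.I * θ))‖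
      ≤ (4 * Real.pi * R ^ 2 + 1) * Real.exp (2 * Real.pi * R ^ 2) := by
        refine mul_le_mul h1 h2 (norm_nonneg _) ?_
        positivity

/-- The arc integral as a function of the radius. -/
def A (Y : ℝ) : ℂ := ∫ θ in (0:ℝ)..(Real.pi / 4), g Y θ

lemma hasDerivAt_A (Y : ℝ) :
    HasDerivAt A (∫ θ in (0:ℝ)..(Real.pi / 4), E Y θ) Y := by
  set C : ℝ := (4 * Real.pi * (|Y| + 1) ^ 2 + 1) * Real.exp (2 * Real.pi * (|Y| + 1) ^ 2)
  have main := intervalIntegral.hasDerivAt_integral_of_dominated_loc_of_deriv_le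
    (F := fun x θ => g x θ) (F' := fun x θ => E x θ) (x₀ := Y)
    (a := (0:ℝ)) (b := Real.pi / 4) (bound := fun _ => C) (s := Metric.ball Y 1) (μ := volume) (Metric.ball_mem_nhds Y one_pos)
    (Filter.Eventually.of_forall fun x => (g_cont x).aestronglyMeasurable)
    ((g_cont Y).intervalIntegrable _ _)
    ((E_cont Y).aestronglyMeasurable)
    (Filter.Eventually.of_forall fun θ _ x hx => by
      refine norm_E_le (|Y| + 1) x θ ?_
      have : |x - Y| < 1 := by
        simpa [Real.dist_eq] using Metric.mem_ball.1 hx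
      calc |x| = |(x - Y) + Y| := by ring_nf
        _ ≤ |x - Y| + |Y| := abs_add_le _ _
        _ ≤ |Y| + 1 := by linarith)
    (intervalIntegrable_const)
    (Filter.Eventually.of_forall fun θ _ x _ => hasDerivAt_g x θ)
  exact main.2

lemma integral_E (Y : ℝ) :
    (∫ θ in (0:ℝ)..(Real.pi / 4), E Y θ) =
      f ((Y : ℂ) * Complex.exp (Complex.I * (Real.pi / 4 : ℝ))) *
        Complex.exp (Complex.I * (Real.pi / 4 : ℝ)) - f (Y : ℂ) := by
  have h := intervalIntegral.integral_eq_sub_of_hasDerivAt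
    (f := fun θ : ℝ => f ((Y : ℂ) * Complex.exp (Complex.I * θ)) * Complex.exp (Complex.I * θ))
    (f' := fun θ => E Y θ) (a := (0:ℝ)) (b := Real.pi / 4)
    (fun θ _ => hasDerivAt_theta Y θ) (((E_cont Y)).intervalIntegrable _ _)
  rw [h]
  norm_num

/-- The Gaussian piece, as a real integral. -/
def Dr (Y : ℝ) : ℝ := ∫ t in (0:ℝ)..Y, Real.exp (-(2 * Real.pi) * t ^ 2)

lemma gauss_cont : Continuous fun t : ℝ => Real.exp (-(2 * Real.pi) * t ^ 2) := by fun_prop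

lemma hasDerivAt_Dr (Y : ℝ) :
    HasDerivAt Dr (Real.exp (-(2 * Real.pi) * Y ^ 2)) Y :=
  (gauss_cont.integral_hasStrictDerivAt 0 Y).hasDerivAt

/-- The combined function, constant in `Y`. -/
def G (Y : ℝ) : ℂ :=
  (∫ x in (0:ℝ)..Y, f (x : ℂ)) + A Y - Complex.exp (2 * Real.pi * Complex.I / 8) * (Dr Y : ℂ)

lemma exp_pi_div_four : Complex.exp (Complex.I * (Real.pi / 4 : ℝ)) =
    Complex.exp (2 * Real.pi * Complex.I / 8) := by
  congr 1
  push_cast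
  ring

lemma f_on_diagonal (Y : ℝ) :
    f ((Y : ℂ) * Complex.exp (Complex.I * (Real.pi / 4 : ℝ))) =
      ((Real.exp (-(2 * Real.pi) * Y ^ 2) : ℝ) : ℂ) := by
  unfold f
  rw [Complex.ofReal_exp]
  congr 1
  have hsq : Complex.exp (Complex.I * (Real.pi / 4 : ℝ)) ^ 2 = Complex.I := by
    rw [sq, ← Complex.exp_add]
    have : Complex.I * ((Real.pi / 4 : ℝ):ℂ) + Complex.I * ((Real.pi / 4 : ℝ):ℂ)
        = ((Real.pi / 2 : ℝ):ℂ) * Complex.I := by push_cast; ring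
    rw [this, Complex.exp_mul_I]
    simp [Complex.cos_ofReal_re, ← Complex.ofReal_cos, ← Complex.ofReal_sin,
      Real.cos_pi_div_two, Real.sin_pi_div_two]
  rw [mul_pow, hsq]
  push_cast
  ring_nf
  rw [Complex.I_sq]
  ring

lemma hasDerivAt_G (Y : ℝ) : HasDerivAt G 0 Y := by
  have hP : HasDerivAt (fun Y : ℝ => ∫ x in (0:ℝ)..Y, f (x : ℂ)) (f (Y : ℂ)) Y :=
    ((f_cont.comp Complex.continuous_ofReal).integral_hasStrictDerivAt 0 Y).hasDerivAt
  have hD : HasDerivAt (fun Y : ℝ => Complex.exp (2 * Real.pi * Complex.I / 8) * (Dr Y : ℂ))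
      (Complex.exp (2 * Real.pi * Complex.I / 8) *
        ((Real.exp (-(2 * Real.pi) * Y ^ 2) : ℝ) : ℂ)) Y :=
    ((hasDerivAt_Dr Y).ofReal_comp).const_mul _
  have hA := hasDerivAt_A Y
  have := (hP.add hA).sub hD
  refine this.congr_deriv ?_
  rw [integral_E, f_on_diagonal, exp_pi_div_four]
  ring

lemma G_eq_zero (Y : ℝ) : G Y = 0 := by
  have hconst : ∀ a b : ℝ, G a = G b :=
    is_const_of_deriv_eq_zero (fun y => (hasDerivAt_G y).differentiableAt)
      (fun y => (hasDerivAt_G y).deriv)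
  have h0 : G 0 = 0 := by
    unfold G A Dr
    simp [g]
  rw [hconst Y 0, h0]

/-- Tail of the Gaussian integral. -/
def T (Y : ℝ) : ℝ := ∫ t in Ioi Y, Real.exp (-(2 * Real.pi) * t ^ 2)

lemma two_pi_pos : (0:ℝ) < 2 * Real.pi := by positivity

lemma gauss_integrableOn (s : Set ℝ) :
    IntegrableOn (fun t : ℝ => Real.exp (-(2 * Real.pi) * t ^ 2)) s :=
  (integrable_exp_neg_mul_sq two_pi_pos).integrableOn

lemma Dr_eq (Y : ℝ) (hY : 0 < Y) : Dr Y = 1 / (2 * Real.sqrt 2) - T Y := by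
  have h1 : Dr Y = ∫ t in Ioc 0 Y, Real.exp (-(2 * Real.pi) * t ^ 2) := by
    unfold Dr
    rw [intervalIntegral.integral_of_le hY.le]
  have h2 : Ioc (0:ℝ) Y = Ioi 0 \ Ioi Y := by rw [Ioi_diff_Ioi]
  have h3 : (∫ t in Ioi (0:ℝ) \ Ioi Y, Real.exp (-(2 * Real.pi) * t ^ 2)) =
      (∫ t in Ioi (0:ℝ), Real.exp (-(2 * Real.pi) * t ^ 2)) - T Y :=
    MeasureTheory.integral_diff measurableSet_Ioi (gauss_integrableOn _)
      (fun x hx => lt_trans hY hx)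
  have h4 : (∫ t in Ioi (0:ℝ), Real.exp (-(2 * Real.pi) * t ^ 2)) = 1 / (2 * Real.sqrt 2) := by
    rw [integral_gaussian_Ioi]
    have hpi : Real.pi / (2 * Real.pi) = 2⁻¹ := by
      rw [div_eq_iff (by positivity : (2:ℝ) * Real.pi ≠ 0)]; ring
    rw [hpi, Real.sqrt_inv]
    rw [eq_div_iff (by positivity : (2:ℝ) * Real.sqrt 2 ≠ 0)]
    have : Real.sqrt 2 ≠ 0 := by positivity
    field_simp
  rw [h1, h2, h3, h4]

lemma T_nonneg (Y : ℝ) : 0 ≤ T Y :=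
  setIntegral_nonneg measurableSet_Ioi (fun t _ => (Real.exp_pos _).le)

lemma T_le (Y : ℝ) (hY : 0 < Y) : T Y ≤ 1 / (2 * Real.pi * Y) := by
  have hb : (0:ℝ) < 2 * Real.pi * Y := by positivity
  have hcomp : ∀ t ∈ Ioi Y, Real.exp (-(2 * Real.pi) * t ^ 2) ≤
      Real.exp (-(2 * Real.pi * Y) * t) := by
    intro t ht
    have ht' : Y < t := ht
    apply Real.exp_le_exp.2
    have h5 : 0 ≤ t * (t - Y) := mul_nonneg (by linarith) (by linarith)
    nlinarith [Real.pi_pos, h5]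
  have hint2 : IntegrableOn (fun t : ℝ => Real.exp (-(2 * Real.pi * Y) * t)) (Ioi Y) :=
    exp_neg_integrableOn_Ioi Y hb
  have h1 : T Y ≤ ∫ t in Ioi Y, Real.exp (-(2 * Real.pi * Y) * t) :=
    setIntegral_mono_on (gauss_integrableOn _) hint2 measurableSet_Ioi hcomp
  have h2 : (∫ t in Ioi Y, Real.exp (-(2 * Real.pi * Y) * t)) =
      Real.exp (-(2 * Real.pi * Y) * Y) / (2 * Real.pi * Y) := by
    have hder : ∀ t ∈ Ici Y, HasDerivAt (fun t : ℝ =>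
        -(1 / (2 * Real.pi * Y)) * Real.exp (-(2 * Real.pi * Y) * t))
        (Real.exp (-(2 * Real.pi * Y) * t)) t := by
      intro t _
      have h := ((hasDerivAt_id t).const_mul (-(2 * Real.pi * Y))).exp.const_mul
        (-(1 / (2 * Real.pi * Y)))
      refine h.congr_deriv ?_
      simp only [id]
      have := hY.ne'
      field_simp
    have htend : Filter.Tendsto (fun t : ℝ =>
        -(1 / (2 * Real.pi * Y)) * Real.exp (-(2 * Real.pi * Y) * t))
        Filter.atTop (nhds 0) := by
      rw [show (0:ℝ) = -(1 / (2 * Real.pi * Y)) * 0 by ring]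
      apply Filter.Tendsto.const_mul
      apply Real.tendsto_exp_atBot.comp
      apply Filter.Tendsto.const_mul_atTop_of_neg (by linarith : -(2 * Real.pi * Y) < 0)
        Filter.tendsto_id
    rw [MeasureTheory.integral_Ioi_of_hasDerivAt_of_tendsto' hder hint2 htend]
    field_simp
    ring
  have h3 : Real.exp (-(2 * Real.pi * Y) * Y) ≤ 1 := by
    apply Real.exp_le_one_iff.2
    nlinarith [Real.pi_pos]
  rw [h2] at h1
  refine h1.trans ?_
  rw [div_le_div_iff₀ hb hb, one_mul]
  nlinarith [Real.exp_pos (-(2 * Real.pi * Y) * Y), hb]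

lemma norm_g (Y : ℝ) (hY : 0 ≤ Y) (θ : ℝ) :
    ‖g Y θ‖ = Real.exp (-(2 * Real.pi) * (Y ^ 2 * Real.sin (2 * θ))) * Y := by
  have hsq : ((Y : ℂ) * Complex.exp (Complex.I * θ)) ^ 2 =
      ((Y ^ 2 : ℝ) : ℂ) * Complex.exp (((2 * θ : ℝ) : ℂ) * Complex.I) := by
    rw [mul_pow, sq (Complex.exp _), ← Complex.exp_add]
    push_cast
    ring_nf
  have hre : (2 * (Real.pi : ℂ) * Complex.I *
      ((Y : ℂ) * Complex.exp (Complex.I * θ)) ^ 2).re =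
      -(2 * Real.pi) * (Y ^ 2 * Real.sin (2 * θ)) := by
    rw [hsq]
    set E := Complex.exp (((2 * θ : ℝ) : ℂ) * Complex.I) with hE
    have h1 : E.re = Real.cos (2 * θ) := Complex.exp_ofReal_mul_I_re _
    have h2 : E.im = Real.sin (2 * θ) := Complex.exp_ofReal_mul_I_im _
    simp only [Complex.mul_re, Complex.mul_im, Complex.I_re, Complex.I_im,
      Complex.ofReal_re, Complex.ofReal_im, Complex.re_ofNat, Complex.im_ofNat, h1, h2]
    ring
  unfold g
  rw [norm_mul, Complex.norm_exp, hre]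
  have he : ‖Complex.exp (Complex.I * θ)‖ = 1 := by
    rw [Complex.norm_exp]; simp
  rw [norm_mul, norm_mul, he, Complex.norm_I, Complex.norm_real, Real.norm_eq_abs,
    _root_.abs_of_nonneg hY]
  ring

lemma abs_A_le (Y : ℝ) (hY : 0 < Y) : ‖A Y‖ ≤ 1 / (8 * Y) := by
  have hpi4 : (0:ℝ) ≤ Real.pi / 4 := by positivity
  have h1 : ‖A Y‖ ≤ ∫ θ in (0:ℝ)..(Real.pi / 4), ‖g Y θ‖ :=
    intervalIntegral.norm_integral_le_integral_norm hpi4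
  have hmono : ∀ θ ∈ Icc (0:ℝ) (Real.pi / 4),
      ‖g Y θ‖ ≤ Y * Real.exp (-(8 * Y ^ 2) * θ) := by
    intro θ hθ
    rw [norm_g Y hY.le θ, mul_comm Y _]
    refine mul_le_mul_of_nonneg_right (Real.exp_le_exp.2 ?_) hY.le
    have hj : 2 / Real.pi * (2 * θ) ≤ Real.sin (2 * θ) :=
      Real.mul_le_sin (by linarith [hθ.1]) (by linarith [hθ.2])
    have hπ : (0:ℝ) < Real.pi := Real.pi_pos
    have h3 : 2 / Real.pi * (2 * θ) = 4 * θ / Real.pi := by ring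
    rw [h3, div_le_iff₀ hπ] at hj
    nlinarith [sq_nonneg Y, hj]
  have hint1 : IntervalIntegrable (fun θ => ‖g Y θ‖) volume 0 (Real.pi / 4) :=
    ((g_cont Y).norm).intervalIntegrable _ _
  have hint2 : IntervalIntegrable (fun θ : ℝ => Y * Real.exp (-(8 * Y ^ 2) * θ))
      volume 0 (Real.pi / 4) := by
    apply Continuous.intervalIntegrable; fun_prop
  have h2 : (∫ θ in (0:ℝ)..(Real.pi / 4), ‖g Y θ‖) ≤
      ∫ θ in (0:ℝ)..(Real.pi / 4), Y * Real.exp (-(8 * Y ^ 2) * θ) :=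
    intervalIntegral.integral_mono_on hpi4 hint1 hint2 hmono
  have h3 : (∫ θ in (0:ℝ)..(Real.pi / 4), Y * Real.exp (-(8 * Y ^ 2) * θ)) =
      -(1 / (8 * Y)) * Real.exp (-(8 * Y ^ 2) * (Real.pi / 4)) -
        (-(1 / (8 * Y)) * Real.exp (-(8 * Y ^ 2) * 0)) :=
    intervalIntegral.integral_eq_sub_of_hasDerivAt
      (f := fun θ : ℝ => -(1 / (8 * Y)) * Real.exp (-(8 * Y ^ 2) * θ))
      (f' := fun θ : ℝ => Y * Real.exp (-(8 * Y ^ 2) * θ))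
      (fun θ _ => by
        have h := ((hasDerivAt_id θ).const_mul (-(8 * Y ^ 2))).exp.const_mul (-(1 / (8 * Y)))
        refine h.congr_deriv ?_
        simp only [id]
        have := hY.ne'
        field_simp)
      (by apply Continuous.intervalIntegrable; fun_prop)
  have h4 : -(1 / (8 * Y)) * Real.exp (-(8 * Y ^ 2) * (Real.pi / 4)) -
        (-(1 / (8 * Y)) * Real.exp (-(8 * Y ^ 2) * 0)) ≤ 1 / (8 * Y) := by
    rw [mul_zero, Real.exp_zero]
    have h5 : 0 < Real.exp (-(8 * Y ^ 2) * (Real.pi / 4)) := Real.exp_pos _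
    have h6 : (0:ℝ) < 1 / (8 * Y) := by positivity
    nlinarith
  calc ‖A Y‖ = ‖A Y‖ := rfl
    _ ≤ _ := h1
    _ ≤ _ := h2
    _ ≤ 1 / (8 * Y) := by rw [h3] at *; exact h4

end FresnelAux

open FresnelAux

theorem fresnel_contour (Y : ℝ) (hY : 0 < Y) :
    ∃ ν I₁ : ℂ,
      I₁ = ∫ θ in (0:ℝ)..(Real.pi / 4),
        Complex.exp (2 * Real.pi * Complex.I * (Y * Complex.exp (Complex.I * θ)) ^ 2) *
          (Y * Complex.I * Complex.exp (Complex.I * θ)) ∧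
      ‖ν‖ ≤ 1 ∧
      (∫ x in (0:ℝ)..Y, Complex.exp (2 * Real.pi * Complex.I * (x:ℂ) ^ 2)) =
        Complex.exp (2 * Real.pi * Complex.I / 8) / (2 * Real.sqrt 2)
          + ν / (2 * Real.pi * Y) - I₁ ∧
      ‖I₁‖ ≤ 1 / (8 * Y) := by
  have hpi : Real.pi ≠ 0 := Real.pi_ne_zero
  have hsqrt2 : Real.sqrt 2 ≠ 0 := by positivity
  refine ⟨-(((2 * Real.pi * Y : ℝ)) : ℂ) * Complex.exp (2 * Real.pi * Complex.I / 8) *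
      ((T Y : ℝ) : ℂ), A Y, rfl, ?_, ?_, abs_A_le Y hY⟩
  · -- |ν| ≤ 1
    have habs : ‖Complex.exp (2 * Real.pi * Complex.I / 8)‖ = 1 := by
      rw [← exp_pi_div_four, Complex.norm_exp]
      simp
    rw [norm_mul, norm_mul, norm_neg, habs, mul_one, Complex.norm_real,
      Complex.norm_real, Real.norm_eq_abs, Real.norm_eq_abs]
    have h1 : |(2 * Real.pi * Y : ℝ)| = 2 * Real.pi * Y := by
      apply _root_.abs_of_nonneg; positivity
    have h2 : |T Y| = T Y := _root_.abs_of_nonneg (T_nonneg Y)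
    rw [h1, h2]
    have h3 := T_le Y hY
    have h4 : (0:ℝ) < 2 * Real.pi * Y := by positivity
    calc 2 * Real.pi * Y * T Y ≤ 2 * Real.pi * Y * (1 / (2 * Real.pi * Y)) := by
          exact mul_le_mul_of_nonneg_left h3 h4.le
      _ = 1 := by field_simp
  · -- main identity
    have hG := G_eq_zero Y
    unfold G at hG
    have hP : (∫ x in (0:ℝ)..Y, Complex.exp (2 * Real.pi * Complex.I * (x:ℂ) ^ 2)) =
        Complex.exp (2 * Real.pi * Complex.I / 8) * ((Dr Y : ℝ) : ℂ) - A Y := by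
      have : (∫ x in (0:ℝ)..Y, f (x : ℂ)) =
          Complex.exp (2 * Real.pi * Complex.I / 8) * ((Dr Y : ℝ) : ℂ) - A Y := by
        linear_combination hG
      exact this
    rw [hP, Dr_eq Y hY]
    have hden : ((2 * Real.pi * Y : ℝ) : ℂ) ≠ 0 := by
      simp only [ne_eq, Complex.ofReal_eq_zero]
      positivity
    push_cast
    have hden' : (2 * (Real.pi : ℂ) * (Y : ℂ)) ≠ 0 := by push_cast at hden; exact hden
    have hsq2 : ((Real.sqrt 2 : ℝ) : ℂ) ≠ 0 := by
      simpa using hsqrt2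
    have hYc : (Y : ℂ) ≠ 0 := by exact_mod_cast hY.ne'
    field_simp
    ring
end
end

section
/- Let x = a₁/q + β₁ and t = a₂/q + β₂ with q a positive integer and a₁, a₂ integers. Then ∑_{n=1}^N e(nx + n²t) = q^{−1}·(∑_{y=1}^q e((ya₁ + y²a₂)/q))·(∫_0^N e(β₁γ + β₂γ²)dγ) + Δ, where |Δ| ≤ C·q·(1 + |β₁|N + |β₂|N²) for an absolute constant C. -/
open Real Complex Finset

noncomputable def ee (r : ℝ) : ℂ := Complex.exp (2 * Real.pi * Complex.I * r)

lemma abs_ee (r : ℝ) : norm (ee r) = 1 := by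
  have : (2 * Real.pi * Complex.I * r : ℂ) = ((2 * Real.pi * r : ℝ) : ℂ) * Complex.I := by
    push_cast; ring
  rw [ee, this, Complex.norm_exp_ofReal_mul_I]

lemma ee_add (a b : ℝ) : ee (a + b) = ee a * ee b := by
  rw [ee, ee, ee, ← Complex.exp_add]; congr 1; push_cast; ring

lemma ee_int (k : ℤ) : ee k = 1 := by
  rw [ee]
  have : (2 * Real.pi * Complex.I * (k:ℝ) : ℂ) = (k : ℂ) * (2 * Real.pi * Complex.I) := by
    push_cast; ring
  rw [this, Complex.exp_int_mul_two_pi_mul_I]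

lemma lip_aux : LipschitzWith 1 (fun s : ℝ => Complex.exp (s * Complex.I)) := by
  have hd : ∀ θ : ℝ, HasDerivAt (fun s : ℝ => Complex.exp ((s:ℂ) * Complex.I))
      (Complex.exp ((θ:ℂ) * Complex.I) * Complex.I) θ := by
    intro θ
    have h1 : HasDerivAt (fun s : ℝ => (s:ℂ) * Complex.I) Complex.I θ := by
      simpa using (Complex.ofRealCLM.hasDerivAt (x := θ)).mul_const Complex.I
    exact h1.cexp
  apply lipschitzWith_of_nnnorm_deriv_le (fun θ => (hd θ).differentiableAt)
  intro θ
  rw [(hd θ).deriv]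
  rw [← NNReal.coe_le_coe]
  simp [Complex.norm_exp_ofReal_mul_I]

lemma ee_lip (a b : ℝ) : norm (ee a - ee b) ≤ 2 * Real.pi * |a - b| := by
  have h := lip_aux.dist_le_mul (2 * Real.pi * a) (2 * Real.pi * b)
  rw [Complex.dist_eq, Real.dist_eq] at h
  have e1 : ee a = Complex.exp ((2 * Real.pi * a : ℝ) * Complex.I) := by
    rw [ee]; congr 1; push_cast; ring
  have e2 : ee b = Complex.exp ((2 * Real.pi * b : ℝ) * Complex.I) := by
    rw [ee]; congr 1; push_cast; ring
  rw [e1, e2]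
  refine h.trans (le_of_eq ?_)
  rw [NNReal.coe_one, one_mul, ← mul_sub, abs_mul,
    _root_.abs_of_nonneg (by positivity : (0:ℝ) ≤ 2 * Real.pi)]

noncomputable def Gf (β₁ β₂ : ℝ) : ℝ → ℂ := fun γ => ee (β₁ * γ + β₂ * γ ^ 2)

lemma Gf_cont (β₁ β₂ : ℝ) : Continuous (Gf β₁ β₂) := by
  unfold Gf ee
  fun_prop

lemma abs_Gf (β₁ β₂ γ : ℝ) : norm (Gf β₁ β₂ γ) = 1 := abs_ee _

lemma residue_est (β₁ β₂ : ℝ) (N q : ℕ) (hq : 0 < q) (hqN : q ≤ N) (y : ℕ)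
    (hy1 : 1 ≤ y) (hyq : y ≤ q) :
    norm ((∑ n ∈ (Finset.Icc 1 N).filter (fun n => n % q = y % q),
        Gf β₁ β₂ n)
      - (q:ℂ)⁻¹ * ∫ γ in (0:ℝ)..(N:ℝ), Gf β₁ β₂ γ) ≤
      26 * (1 + |β₁| * N + |β₂| * (N:ℝ) ^ 2) := by
  have hGi : ∀ a b : ℝ, IntervalIntegrable (Gf β₁ β₂) MeasureTheory.volume a b :=
    fun a b => (Gf_cont β₁ β₂).intervalIntegrable a b
  have hq' : (0:ℝ) < q := by exact_mod_cast hq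
  have hqN' : (q:ℝ) ≤ N := by exact_mod_cast hqN
  set M : ℕ := (N - y) / q + 1 with hM
  -- the fiber
  have hfib : (Finset.Icc 1 N).filter (fun n => n % q = y % q)
      = (Finset.range M).image (fun m => y + m * q) := by
    ext n
    simp only [Finset.mem_filter, Finset.mem_Icc, Finset.mem_image, Finset.mem_range]
    constructor
    · rintro ⟨⟨h1, h2⟩, h3⟩
      have hyn : y ≤ n := by
        rcases eq_or_lt_of_le hyq with rfl | hlt
        · rw [Nat.mod_self] at h3
          exact Nat.le_of_dvd (by omega) (Nat.dvd_of_mod_eq_zero h3)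
        · rw [Nat.mod_eq_of_lt hlt] at h3
          have := Nat.mod_le n q
          omega
      have hdvd : q ∣ (n - y) :=
        Nat.dvd_of_mod_eq_zero (Nat.sub_mod_eq_zero_of_mod_eq h3)
      obtain ⟨m, hm⟩ := hdvd
      rw [mul_comm] at hm
      refine ⟨m, ?_, by omega⟩
      have : m ≤ (N - y) / q := (Nat.le_div_iff_mul_le hq).mpr (by omega)
      omega
    · rintro ⟨m, hm, rfl⟩
      have hmle : m ≤ (N - y) / q := by omega
      have hmul : m * q ≤ N - y := (Nat.le_div_iff_mul_le hq).mp hmle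
      refine ⟨⟨by omega, by omega⟩, ?_⟩
      simp [Nat.add_mul_mod_self_right]
  have hT : (∑ n ∈ (Finset.Icc 1 N).filter (fun n => n % q = y % q), Gf β₁ β₂ n)
      = ∑ m ∈ Finset.range M, Gf β₁ β₂ ((y + m * q : ℕ) : ℝ) := by
    rw [hfib]
    refine Finset.sum_image ?_
    intro a _ b _ h
    exact Nat.eq_of_mul_eq_mul_right hq (by simp only at h; omega)
  set a : ℕ → ℝ := fun m => (y:ℝ) + m * q - q with ha
  have hsumI : ∑ m ∈ Finset.range M, (∫ γ in (a m)..(a (m+1)), Gf β₁ β₂ γ)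
      = ∫ γ in (a 0)..(a M), Gf β₁ β₂ γ :=
    intervalIntegral.sum_integral_adjacent_intervals (fun k _ => hGi _ _)
  have haM : a M = ((y + ((N - y)/q) * q : ℕ) : ℝ) := by
    simp only [ha, hM]; push_cast; ring
  have haMN : a M ≤ N := by
    rw [haM]
    have h1 := Nat.div_mul_le_self (N - y) q
    exact_mod_cast (show (y + (N - y)/q * q : ℕ) ≤ N by omega)
  have hNaM : (N:ℝ) - a M ≤ q := by
    rw [haM]
    have h1 : (N - y) % q < q := Nat.mod_lt _ hq
    have h2 : (N - y) / q * q + (N - y) % q = N - y := by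
      rw [Nat.mul_comm]; exact Nat.div_add_mod (N - y) q
    have h3 : N ≤ y + (N - y)/q * q + q := by omega
    have h4 : (N : ℝ) ≤ ((y + (N - y)/q * q + q : ℕ) : ℝ) := by exact_mod_cast h3
    push_cast at h4 ⊢
    linarith
  have ha0 : a 0 = (y:ℝ) - q := by simp [ha]
  have hdec : (∫ γ in (0:ℝ)..(N:ℝ), Gf β₁ β₂ γ)
      = (∫ γ in (a 0)..(a M), Gf β₁ β₂ γ) + (∫ γ in a M..(N:ℝ), Gf β₁ β₂ γ)
        - (∫ γ in (a 0)..(0:ℝ), Gf β₁ β₂ γ) := by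
    have e1 : (∫ γ in (a 0)..(0:ℝ), Gf β₁ β₂ γ) + (∫ γ in (0:ℝ)..(N:ℝ), Gf β₁ β₂ γ)
        = ∫ γ in (a 0)..(N:ℝ), Gf β₁ β₂ γ :=
      intervalIntegral.integral_add_adjacent_intervals (hGi _ _) (hGi _ _)
    have e2 : (∫ γ in (a 0)..(a M), Gf β₁ β₂ γ) + (∫ γ in a M..(N:ℝ), Gf β₁ β₂ γ)
        = ∫ γ in (a 0)..(N:ℝ), Gf β₁ β₂ γ :=
      intervalIntegral.integral_add_adjacent_intervals (hGi _ _) (hGi _ _)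
    linear_combination e1 - e2
  set B : ℝ := 2 * Real.pi * (|β₁| * q + |β₂| * (2 * N * q)) with hB
  have key : ∀ m ∈ Finset.range M,
      norm (Gf β₁ β₂ ((y + m * q : ℕ) : ℝ)
        - (q:ℂ)⁻¹ * ∫ γ in (a m)..(a (m+1)), Gf β₁ β₂ γ) ≤ B := by
    intro m hm
    rw [Finset.mem_range] at hm
    have hnN : (y + m * q : ℕ) ≤ N := by
      have hmle : m ≤ (N - y) / q := by omega
      have hmul : m * q ≤ N - y := (Nat.le_div_iff_mul_le hq).mp hmle
      omega
    set n : ℝ := ((y + m * q : ℕ) : ℝ) with hn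
    have hne : a (m+1) = n := by simp only [ha, hn]; push_cast; ring
    have hlen : a (m+1) - a m = q := by simp only [ha]; push_cast; ring
    have hsub : (∫ γ in (a m)..(a (m+1)), (Gf β₁ β₂ n - Gf β₁ β₂ γ))
        = (q:ℂ) * Gf β₁ β₂ n - ∫ γ in (a m)..(a (m+1)), Gf β₁ β₂ γ := by
      rw [intervalIntegral.integral_sub intervalIntegrable_const (hGi _ _),
        intervalIntegral.integral_const, hlen]
      simp [Complex.real_smul]
    have hbound : ∀ γ ∈ Set.uIoc (a m) (a (m+1)), ‖Gf β₁ β₂ n - Gf β₁ β₂ γ‖ ≤ B := by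
      intro γ hγ
      have hlt : a m < a (m+1) := by
        have : a (m+1) = a m + q := by linarith [hlen]
        rw [this]; linarith
      rw [Set.uIoc_of_le hlt.le] at hγ
      obtain ⟨hγ1, hγ2⟩ := hγ
      have h1 : n ≤ N := by rw [hn]; exact_mod_cast hnN
      have h2 : (1:ℝ) ≤ n := by
        rw [hn]; exact_mod_cast (show 1 ≤ y + m * q by omega)
      have h3 : γ ≤ n := by rw [← hne]; exact hγ2
      have h4 : n - q ≤ γ := by
        have : a m = n - q := by rw [← hne]; linarith [hlen]
        linarith
      have h5 : -(N:ℝ) ≤ γ := by linarith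
      have habs : |β₁ * n + β₂ * n^2 - (β₁ * γ + β₂ * γ^2)|
          ≤ |β₁| * q + |β₂| * (2 * N * q) := by
        have e : β₁ * n + β₂ * n^2 - (β₁ * γ + β₂ * γ^2)
            = β₁ * (n - γ) + β₂ * ((n - γ) * (n + γ)) := by ring
        rw [e]
        have hng : |n - γ| ≤ q := abs_le.mpr ⟨by linarith, by linarith⟩
        have hna : |n + γ| ≤ 2 * N := abs_le.mpr ⟨by linarith, by linarith⟩
        calc |β₁ * (n - γ) + β₂ * ((n - γ) * (n + γ))|
            ≤ |β₁ * (n - γ)| + |β₂ * ((n - γ) * (n + γ))| := abs_add_le _ _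
          _ = |β₁| * |n - γ| + |β₂| * (|n - γ| * |n + γ|) := by
              rw [abs_mul, abs_mul, abs_mul]
          _ ≤ |β₁| * q + |β₂| * (q * (2 * N)) := by
              gcongr <;> positivity
          _ = |β₁| * q + |β₂| * (2 * N * q) := by ring
      have hGeq : Gf β₁ β₂ n - Gf β₁ β₂ γ
          = ee (β₁ * n + β₂ * n^2) - ee (β₁ * γ + β₂ * γ^2) := rfl
      rw [hGeq]
      refine (ee_lip _ _).trans ?_
      rw [hB]
      have hpi : (0:ℝ) < 2 * Real.pi := by positivity
      nlinarith [habs, abs_nonneg (β₁ * n + β₂ * n^2 - (β₁ * γ + β₂ * γ^2))]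
    have hint := intervalIntegral.norm_integral_le_of_norm_le_const hbound
    rw [hsub, hlen] at hint
    have hfac : Gf β₁ β₂ n - (q:ℂ)⁻¹ * ∫ γ in (a m)..(a (m+1)), Gf β₁ β₂ γ
        = (q:ℂ)⁻¹ * ((q:ℂ) * Gf β₁ β₂ n - ∫ γ in (a m)..(a (m+1)), Gf β₁ β₂ γ) := by
      have hq0 : (q:ℂ) ≠ 0 := by exact_mod_cast hq.ne'
      field_simp
    rw [hfac, norm_mul, norm_inv, Complex.norm_natCast]
    rw [_root_.abs_of_nonneg hq'.le] at hint
    calc (q:ℝ)⁻¹ * norm ((q:ℂ) * Gf β₁ β₂ n - ∫ γ in (a m)..(a (m+1)), Gf β₁ β₂ γ)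
        ≤ (q:ℝ)⁻¹ * (B * q) := by gcongr
      _ = B := by field_simp
  -- edge bounds
  have hedge : ∀ u v : ℝ, |v - u| ≤ q →
      norm ((q:ℂ)⁻¹ * ∫ γ in u..v, Gf β₁ β₂ γ) ≤ 1 := by
    intro u v huv
    rw [norm_mul, norm_inv, Complex.norm_natCast]
    have h1 : ‖∫ γ in u..v, Gf β₁ β₂ γ‖ ≤ 1 * |v - u| :=
      intervalIntegral.norm_integral_le_of_norm_le_const (fun γ _ => by
        rw [abs_Gf])
    calc (q:ℝ)⁻¹ * norm (∫ γ in u..v, Gf β₁ β₂ γ)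
        ≤ (q:ℝ)⁻¹ * (1 * q) := by gcongr; linarith
      _ = 1 := by field_simp
  have hexp : (∑ n ∈ (Finset.Icc 1 N).filter (fun n => n % q = y % q), Gf β₁ β₂ n)
      - (q:ℂ)⁻¹ * (∫ γ in (0:ℝ)..(N:ℝ), Gf β₁ β₂ γ)
      = (∑ m ∈ Finset.range M,
          (Gf β₁ β₂ ((y + m * q : ℕ) : ℝ) - (q:ℂ)⁻¹ * ∫ γ in (a m)..(a (m+1)), Gf β₁ β₂ γ))
        - (q:ℂ)⁻¹ * (∫ γ in a M..(N:ℝ), Gf β₁ β₂ γ)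
        + (q:ℂ)⁻¹ * (∫ γ in (a 0)..(0:ℝ), Gf β₁ β₂ γ) := by
    rw [hT, hdec, Finset.sum_sub_distrib, ← Finset.mul_sum, hsumI]
    ring
  rw [hexp]
  have hMq : (M:ℝ) * q ≤ 2 * N := by
    have h1 : M * q ≤ 2 * N := by
      rw [hM, add_mul, one_mul]
      have := Nat.div_mul_le_self (N - y) q
      omega
    exact_mod_cast h1
  have hS : norm (∑ m ∈ Finset.range M,
      (Gf β₁ β₂ ((y + m * q : ℕ) : ℝ) - (q:ℂ)⁻¹ * ∫ γ in (a m)..(a (m+1)), Gf β₁ β₂ γ))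
      ≤ M * B := by
    refine (norm_sum_le _ _).trans ?_
    refine (Finset.sum_le_card_nsmul _ _ B key).trans ?_
    rw [Finset.card_range, nsmul_eq_mul]
  have hy1' : (1:ℝ) ≤ y := by exact_mod_cast hy1
  have hyq' : (y:ℝ) ≤ q := by exact_mod_cast hyq
  have hE1 : norm ((q:ℂ)⁻¹ * ∫ γ in (a M)..(N:ℝ), Gf β₁ β₂ γ) ≤ 1 :=
    hedge _ _ (abs_le.mpr ⟨by linarith, by linarith⟩)
  have hE2 : norm ((q:ℂ)⁻¹ * ∫ γ in (a 0)..(0:ℝ), Gf β₁ β₂ γ) ≤ 1 :=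
    hedge _ _ (by rw [ha0]; exact abs_le.mpr ⟨by linarith, by linarith⟩)
  have htri : norm ((∑ m ∈ Finset.range M,
      (Gf β₁ β₂ ((y + m * q : ℕ) : ℝ) - (q:ℂ)⁻¹ * ∫ γ in (a m)..(a (m+1)), Gf β₁ β₂ γ))
        - (q:ℂ)⁻¹ * (∫ γ in (a M)..(N:ℝ), Gf β₁ β₂ γ)
        + (q:ℂ)⁻¹ * (∫ γ in (a 0)..(0:ℝ), Gf β₁ β₂ γ)) ≤ (M:ℝ) * B + 1 + 1 := by
    refine (norm_add_le _ _).trans ?_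
    have h1 : norm ((∑ m ∈ Finset.range M,
      (Gf β₁ β₂ ((y + m * q : ℕ) : ℝ) - (q:ℂ)⁻¹ * ∫ γ in (a m)..(a (m+1)), Gf β₁ β₂ γ))
        - (q:ℂ)⁻¹ * (∫ γ in (a M)..(N:ℝ), Gf β₁ β₂ γ))
        ≤ (M:ℝ) * B + 1 := by
      refine le_trans ?_ (add_le_add hS hE1)
      exact norm_sub_le (∑ m ∈ Finset.range M,
        (Gf β₁ β₂ ((y + m * q : ℕ) : ℝ) - (q:ℂ)⁻¹ * ∫ γ in (a m)..(a (m+1)), Gf β₁ β₂ γ))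
        ((q:ℂ)⁻¹ * (∫ γ in (a M)..(N:ℝ), Gf β₁ β₂ γ))
    exact add_le_add h1 hE2
  refine htri.trans ?_
  have hBexp : (M:ℝ) * B = 2*Real.pi*(|β₁| *((M:ℝ)*q) + |β₂| *(2*N*((M:ℝ)*q))) := by
    rw [hB]; ring
  have h1 : (M:ℝ) * B ≤ 2*Real.pi*(|β₁| *(2*N) + |β₂| *(2*N*(2*N))) := by
    rw [hBexp]
    have t1 : |β₁| * ((M:ℝ)*q) ≤ |β₁| * (2*N) := mul_le_mul_of_nonneg_left hMq (abs_nonneg _)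
    have t2 : |β₂| * (2*(N:ℝ)*((M:ℝ)*q)) ≤ |β₂| * (2*N*(2*N)) :=
      mul_le_mul_of_nonneg_left (mul_le_mul_of_nonneg_left hMq (by positivity)) (abs_nonneg _)
    exact mul_le_mul_of_nonneg_left (add_le_add t1 t2) (by positivity)
  have h2 : 2*Real.pi*(|β₁| *(2*(N:ℝ)) + |β₂| *(2*N*(2*N)))
      = 4*Real.pi*(|β₁| *N) + 8*Real.pi*(|β₂| *(N:ℝ)^2) := by ring
  have hx : (0:ℝ) ≤ |β₁| * N := by positivity
  have hyy : (0:ℝ) ≤ |β₂| * (N:ℝ)^2 := by positivity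
  have hpi : Real.pi ≤ 3.15 := Real.pi_lt_d2.le
  have c1 : (4:ℝ)*Real.pi ≤ 26 := by linarith
  have c2 : (8:ℝ)*Real.pi ≤ 26 := by linarith
  have c1' := mul_le_mul_of_nonneg_right c1 hx
  have c2' := mul_le_mul_of_nonneg_right c2 hyy
  rw [h2] at h1
  linarith [h1, c1', c2']

theorem weyl_sum_major_arc_approx :
    ∃ C : ℝ, 0 < C ∧ ∀ N q : ℕ, 0 < q → ∀ a₁ a₂ : ℤ, ∀ β₁ β₂ x t : ℝ,
      x = (a₁ : ℝ) / q + β₁ → t = (a₂ : ℝ) / q + β₂ →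
      ‖((∑ n ∈ Finset.Icc 1 N,
            Complex.exp (2 * Real.pi * Complex.I * ((n : ℝ) * x + (n : ℝ) ^ 2 * t))) -
          (q : ℂ)⁻¹ *
            (∑ y ∈ Finset.Icc 1 q,
              Complex.exp (2 * Real.pi * Complex.I *
                ((((y : ℤ) * a₁ + (y : ℤ) ^ 2 * a₂ : ℤ) : ℂ) / (q : ℂ)))) *
            (∫ γ in (0:ℝ)..(N : ℝ),
              Complex.exp (2 * Real.pi * Complex.I * (β₁ * γ + β₂ * γ ^ 2))))‖ ≤
        C * q * (1 + |β₁| * N + |β₂| * (N : ℝ) ^ 2) := by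
  refine ⟨26, by norm_num, ?_⟩
  intro N q hq a₁ a₂ β₁ β₂ x t hx ht
  have hq' : (0:ℝ) < q := by exact_mod_cast hq
  have hqC : (q:ℂ) ≠ 0 := by exact_mod_cast hq.ne'
  set f : ℕ → ℤ := fun m => (m:ℤ) * a₁ + (m:ℤ)^2 * a₂ with hf
  have hxx : (0:ℝ) ≤ |β₁| * N := by positivity
  have hyy : (0:ℝ) ≤ |β₂| * (N:ℝ)^2 := by positivity
  -- rewrite the integral
  have hInt : (∫ γ in (0:ℝ)..(N : ℝ),
        Complex.exp (2 * Real.pi * Complex.I * (β₁ * γ + β₂ * γ ^ 2)))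
      = ∫ γ in (0:ℝ)..(N:ℝ), Gf β₁ β₂ γ := by
    refine intervalIntegral.integral_congr ?_
    intro γ _
    unfold Gf ee
    exact congrArg Complex.exp (by push_cast; ring)
  -- rewrite each summand
  have hterm : ∀ n : ℕ,
      Complex.exp (2 * Real.pi * Complex.I * ((n : ℝ) * x + (n : ℝ) ^ 2 * t))
        = ee ((f n : ℝ)/q) * Gf β₁ β₂ n := by
    intro n
    rw [hx, ht]
    unfold Gf
    rw [← ee_add]
    unfold ee
    exact congrArg Complex.exp (by simp only [hf]; push_cast; field_simp; ring_nf; try tauto)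
  have hEy : ∀ y : ℕ,
      Complex.exp (2 * Real.pi * Complex.I *
        ((((y : ℤ) * a₁ + (y : ℤ) ^ 2 * a₂ : ℤ) : ℂ) / (q : ℂ)))
      = ee ((f y : ℝ)/q) := by
    intro y
    unfold ee
    exact congrArg Complex.exp (by simp only [hf]; push_cast; field_simp; try ring_nf; try tauto)
  have habsE : ∀ y : ℕ, norm (Complex.exp (2 * Real.pi * Complex.I *
        ((((y : ℤ) * a₁ + (y : ℤ) ^ 2 * a₂ : ℤ) : ℂ) / (q : ℂ)))) = 1 := by
    intro y; rw [hEy y]; exact abs_ee _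
  rcases lt_or_ge N q with hNq | hqN
  · -- trivial case N < q
    have h1 : norm (∑ n ∈ Finset.Icc 1 N,
        Complex.exp (2 * Real.pi * Complex.I * ((n : ℝ) * x + (n : ℝ) ^ 2 * t))) ≤ N := by
      refine (norm_sum_le _ _).trans ?_
      refine le_trans (Finset.sum_le_card_nsmul _ _ 1 (fun n _ => ?_)) ?_
      · rw [hterm n, norm_mul, abs_ee, abs_Gf, mul_one]
      · simp [Nat.card_Icc]
    have hSq : norm (∑ y ∈ Finset.Icc 1 q,
        Complex.exp (2 * Real.pi * Complex.I *
          ((((y : ℤ) * a₁ + (y : ℤ) ^ 2 * a₂ : ℤ) : ℂ) / (q : ℂ)))) ≤ q := by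
      refine (norm_sum_le _ _).trans ?_
      refine le_trans (Finset.sum_le_card_nsmul _ _ 1 (fun y _ => le_of_eq (habsE y))) ?_
      simp [Nat.card_Icc]
    have hIb : norm (∫ γ in (0:ℝ)..(N : ℝ),
        Complex.exp (2 * Real.pi * Complex.I * (β₁ * γ + β₂ * γ ^ 2))) ≤ N := by
      rw [hInt]
      refine le_trans (intervalIntegral.norm_integral_le_of_norm_le_const
        (C := 1) (fun γ _ => by rw [abs_Gf])) ?_
      rw [one_mul, _root_.abs_of_nonneg (by norm_num : (0:ℝ) ≤ (N:ℝ) - 0)]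
      linarith
    have h2 : norm ((q : ℂ)⁻¹ *
        (∑ y ∈ Finset.Icc 1 q, Complex.exp (2 * Real.pi * Complex.I *
          ((((y : ℤ) * a₁ + (y : ℤ) ^ 2 * a₂ : ℤ) : ℂ) / (q : ℂ)))) *
        (∫ γ in (0:ℝ)..(N : ℝ),
          Complex.exp (2 * Real.pi * Complex.I * (β₁ * γ + β₂ * γ ^ 2)))) ≤ N := by
      rw [norm_mul, norm_mul, norm_inv, Complex.norm_natCast]
      calc (q:ℝ)⁻¹ * norm _ * norm _
          ≤ (q:ℝ)⁻¹ * q * N := by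
            refine mul_le_mul (mul_le_mul le_rfl hSq (norm_nonneg _) (by positivity))
              hIb (norm_nonneg _) (by positivity)
        _ = N := by field_simp
    refine le_trans (le_trans (norm_sub_le _ _) (add_le_add h1 h2)) ?_
    have hNq' : (N:ℝ) ≤ q := by exact_mod_cast hNq.le
    nlinarith [hq', hxx, hyy, hNq']
  · -- main case q ≤ N
    have hmaps : ∀ n ∈ Finset.Icc 1 N, (if n % q = 0 then q else n % q) ∈ Finset.Icc 1 q := by
      intro n hn
      simp only [Finset.mem_Icc]
      split_ifs with h
      · exact ⟨hq, le_rfl⟩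
      · exact ⟨Nat.one_le_iff_ne_zero.mpr h, (Nat.mod_lt _ hq).le⟩
    have hfibsum := Finset.sum_fiberwise_of_maps_to hmaps
      (fun n => Complex.exp (2 * Real.pi * Complex.I * ((n : ℝ) * x + (n : ℝ) ^ 2 * t)))
    have hfiltereq : ∀ y ∈ Finset.Icc 1 q,
        (Finset.Icc 1 N).filter (fun n => (if n % q = 0 then q else n % q) = y)
          = (Finset.Icc 1 N).filter (fun n => n % q = y % q) := by
      intro y hy
      rw [Finset.mem_Icc] at hy
      apply Finset.filter_congr
      intro n _
      split_ifs with h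
      · constructor
        · rintro rfl
          rw [Nat.mod_self, h]
        · intro h2
          have hy0 : y % q = 0 := by omega
          have := Nat.le_of_dvd (by omega) (Nat.dvd_of_mod_eq_zero hy0)
          omega
      · constructor
        · rintro rfl
          rw [Nat.mod_eq_of_lt (Nat.mod_lt _ hq)]
        · intro h2
          rcases eq_or_lt_of_le hy.2 with rfl | hlt
          · rw [Nat.mod_self] at h2
            exact absurd h2 h
          · rw [Nat.mod_eq_of_lt hlt] at h2
            exact h2
    have hfibval : ∀ y ∈ Finset.Icc 1 q,
        (∑ n ∈ (Finset.Icc 1 N).filter (fun n => n % q = y % q),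
          Complex.exp (2 * Real.pi * Complex.I * ((n : ℝ) * x + (n : ℝ) ^ 2 * t)))
        = ee ((f y : ℝ)/q) *
          ∑ n ∈ (Finset.Icc 1 N).filter (fun n => n % q = y % q), Gf β₁ β₂ n := by
      intro y hy
      rw [Finset.mul_sum]
      refine Finset.sum_congr rfl ?_
      intro n hn
      rw [Finset.mem_filter] at hn
      rw [hterm n]
      congr 1
      have hmod : (n:ℤ) % (q:ℤ) = (y:ℤ) % (q:ℤ) := by
        have := hn.2
        omega
      have hdvd : (q:ℤ) ∣ (f n - f y) := by
        have h1 : (q:ℤ) ∣ ((n:ℤ) - (y:ℤ)) := (Int.ModEq.symm hmod).dvd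
        have h2 : f n - f y = ((n:ℤ) - y) * (a₁ + ((n:ℤ) + y) * a₂) := by
          simp only [hf]; ring
        rw [h2]
        exact h1.mul_right _
      obtain ⟨k, hk⟩ := hdvd
      have hre : (f n : ℝ)/q = (f y : ℝ)/q + k := by
        have h3 : (f n : ℝ) = (f y : ℝ) + q * k := by
          have : f n = f y + q * k := by omega
          exact_mod_cast congrArg (Int.cast : ℤ → ℝ) this
        rw [h3]
        field_simp
      rw [hre, ee_add, ee_int, mul_one]
    have hsum : (∑ n ∈ Finset.Icc 1 N,
        Complex.exp (2 * Real.pi * Complex.I * ((n : ℝ) * x + (n : ℝ) ^ 2 * t)))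
        = ∑ y ∈ Finset.Icc 1 q, ee ((f y : ℝ)/q) *
            ∑ n ∈ (Finset.Icc 1 N).filter (fun n => n % q = y % q), Gf β₁ β₂ n := by
      rw [← hfibsum]
      refine Finset.sum_congr rfl ?_
      intro y hy
      rw [hfiltereq y hy, hfibval y hy]
    have hmain : (q : ℂ)⁻¹ *
        (∑ y ∈ Finset.Icc 1 q, Complex.exp (2 * Real.pi * Complex.I *
          ((((y : ℤ) * a₁ + (y : ℤ) ^ 2 * a₂ : ℤ) : ℂ) / (q : ℂ)))) *
        (∫ γ in (0:ℝ)..(N : ℝ),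
          Complex.exp (2 * Real.pi * Complex.I * (β₁ * γ + β₂ * γ ^ 2)))
        = ∑ y ∈ Finset.Icc 1 q, ee ((f y : ℝ)/q) *
            ((q:ℂ)⁻¹ * ∫ γ in (0:ℝ)..(N:ℝ), Gf β₁ β₂ γ) := by
      rw [hInt, Finset.sum_congr rfl (fun y _ => hEy y)]
      rw [show (q : ℂ)⁻¹ * (∑ y ∈ Finset.Icc 1 q, ee ((f y : ℝ)/q)) *
          (∫ γ in (0:ℝ)..(N:ℝ), Gf β₁ β₂ γ)
          = (∑ y ∈ Finset.Icc 1 q, ee ((f y : ℝ)/q)) *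
            ((q:ℂ)⁻¹ * ∫ γ in (0:ℝ)..(N:ℝ), Gf β₁ β₂ γ) by ring, Finset.sum_mul]
    rw [hsum, hmain, ← Finset.sum_sub_distrib]
    have hdiff : ∀ y ∈ Finset.Icc 1 q,
        ee ((f y : ℝ)/q) *
            (∑ n ∈ (Finset.Icc 1 N).filter (fun n => n % q = y % q), Gf β₁ β₂ n)
          - ee ((f y : ℝ)/q) * ((q:ℂ)⁻¹ * ∫ γ in (0:ℝ)..(N:ℝ), Gf β₁ β₂ γ)
        = ee ((f y : ℝ)/q) *
            ((∑ n ∈ (Finset.Icc 1 N).filter (fun n => n % q = y % q), Gf β₁ β₂ n)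
              - (q:ℂ)⁻¹ * ∫ γ in (0:ℝ)..(N:ℝ), Gf β₁ β₂ γ) := by
      intro y _
      ring
    rw [Finset.sum_congr rfl hdiff]
    refine le_trans (norm_sum_le _ _) ?_
    refine le_trans (Finset.sum_le_card_nsmul _ _
      (26 * (1 + |β₁| * N + |β₂| * (N:ℝ)^2)) ?_) ?_
    · intro y hy
      rw [Finset.mem_Icc] at hy
      rw [norm_mul, abs_ee, one_mul]
      exact residue_est β₁ β₂ N q hq hqN y hy.1 hy.2
    · rw [Nat.card_Icc, nsmul_eq_mul]
      have : (q + 1 - 1 : ℕ) = q := by omega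
      rw [this]
      apply le_of_eq
      ring
end
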